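/- arXiv:1908.11631 — 5 statements merged into one kernel-verified Lean document; each statement's English description precedes it below -/
import Mathlib

section
/- Let G = (V,E) be a finite simple graph that is (3,γ)-vector colorable for some 0 < γ < 1/10. Then for every vertex i ∈ V, the subgraph of G induced on the neighborhood N(i) of i is (2,4γ)-vector colorable. -/
/-- A graph `G` is `(k, γ)`-vector colorable if there are unit vectors `v i` in some
Euclidean space `ℝ^d` with `⟨v i, v j⟩ ≤ -1/(k-1) + γ` for every edge `{i, j}`. -/
def VectorColorable {V : Type*} (G : SimpleGraph V) (k : ℕ) (γ : ℝ) : Prop :=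
  ∃ (d : ℕ) (v : V → EuclideanSpace ℝ (Fin d)),
    (∀ i, ‖v i‖ = 1) ∧
    ∀ i j, G.Adj i j → (inner ℝ (v i) (v j) : ℝ) ≤ -(1 / ((k : ℝ) - 1)) + γ

set_option maxHeartbeats 1000000 in
theorem stmt0 {V : Type*} [Fintype V] (G : SimpleGraph V) (γ : ℝ)
    (hγ0 : 0 < γ) (hγ1 : γ < 1 / 10)
    (h : VectorColorable G 3 γ) (i : V) :
    VectorColorable (G.induce (G.neighborSet i)) 2 (4 * γ) := by
  classical
  obtain ⟨d, v, hnorm, hadj⟩ := h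
  have hconst : -(1 / (((3:ℕ):ℝ) - 1)) + γ = -(1/2) + γ := by norm_num
  have hadj' : ∀ j k, G.Adj j k → (inner ℝ (v j) (v k) : ℝ) ≤ -(1/2) + γ :=
    fun j k hjk => hconst ▸ hadj j k hjk
  set t : V → ℝ := fun j => inner ℝ (v i) (v j) with ht
  have habs : ∀ j, |t j| ≤ 1 := by
    intro j
    have := abs_real_inner_le_norm (v i) (v j)
    simpa [hnorm, ht] using this
  have hhalf : ∀ j, G.Adj i j → t j ≤ -(1/2) + γ := fun j hj => hadj' i j hj
  set u : V → EuclideanSpace ℝ (Fin d) := fun j => v j - t j • v i with hu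
  have hcomm : ∀ j, (inner ℝ (v j) (v i) : ℝ) = t j := fun j => (real_inner_comm (v j) (v i)).symm
  have hself : (inner ℝ (v i) (v i) : ℝ) = 1 := by
    rw [real_inner_self_eq_norm_sq, hnorm]; norm_num
  have hiuk : ∀ j k, (inner ℝ (u j) (u k) : ℝ) = inner ℝ (v j) (v k) - t j * t k := by
    intro j k
    simp only [hu, inner_sub_left, inner_sub_right, real_inner_smul_left,
      real_inner_smul_right]
    rw [hcomm j, hself]
    have hk : (inner ℝ (v i) (v k) : ℝ) = t k := rfl
    rw [hk]
    ring
  have hnu : ∀ j, ‖u j‖^2 = 1 - (t j)^2 := by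
    intro j
    have h1 : ‖u j‖^2 = inner ℝ (u j) (u j) := (real_inner_self_eq_norm_sq _).symm
    rw [h1, hiuk j j, real_inner_self_eq_norm_sq, hnorm]
    ring
  -- nonvanishing of u on vertices having an edge within the neighborhood
  have hne : ∀ j k : V, G.Adj i j → G.Adj i k → G.Adj j k → u j ≠ 0 := by
    intro j k hij hik hjk h0
    have h1 : (inner ℝ (u j) (u k) : ℝ) = 0 := by rw [h0]; simp
    rw [hiuk] at h1
    have h2 := hadj' j k hjk
    have hj := hhalf j hij
    have hk := hhalf k hik
    nlinarith [mul_le_mul (by linarith : (1:ℝ)/2 - γ ≤ -t j)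
      (by linarith : (1:ℝ)/2 - γ ≤ -t k) (by linarith) (by linarith [habs j])]
  refine ⟨d, fun j => if u (j : V) = 0 then v i else ‖u (j : V)‖⁻¹ • u (j : V), ?_, ?_⟩
  · intro j
    by_cases hz : u (j : V) = 0
    · simp [hz, hnorm]
    · simp only [hz, if_neg, if_false]
      exact norm_smul_inv_norm hz
  · rintro ⟨j, hj⟩ ⟨k, hk⟩ hjk
    have hij : G.Adj i j := hj
    have hik : G.Adj i k := hk
    have hajk : G.Adj j k := hjk
    have hzj : u j ≠ 0 := hne j k hij hik hajk
    have hzk : u k ≠ 0 := hne k j hik hij hajk.symm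
    simp only [if_neg hzj, if_neg hzk]
    rw [real_inner_smul_left, real_inner_smul_right, hiuk]
    have haj : 0 < ‖u j‖ := norm_pos_iff.mpr hzj
    have hak : 0 < ‖u k‖ := norm_pos_iff.mpr hzk
    set a := ‖u (j : V)‖
    set b := ‖u (k : V)‖
    have h2 := hadj' j k hajk
    have htj := hhalf j hij
    have htk := hhalf k hik
    have haj2 : a^2 = 1 - (t j)^2 := hnu j
    have hak2 : b^2 = 1 - (t k)^2 := hnu k
    have hbj := habs j
    have hbk := habs k
    rw [abs_le] at hbj hbk
    have hab : a * b ≤ 3/4 + γ - γ^2 := by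
      nlinarith [mul_pos haj hak,
        mul_le_mul (by linarith : (1:ℝ)/2 - γ ≤ -t j)
          (by linarith : (1:ℝ)/2 - γ ≤ -t k) (by linarith) (by linarith),
        sq_nonneg (a*b - (3/4 + γ - γ^2)), sq_nonneg (a - b), sq_nonneg (a + b)]
    have htt : (1/2 - γ)^2 ≤ t j * t k := by
      nlinarith [mul_le_mul (by linarith : (1:ℝ)/2 - γ ≤ -t j)
        (by linarith : (1:ℝ)/2 - γ ≤ -t k) (by linarith) (by linarith)]
    have hgoal : (inner ℝ (v j) (v k) : ℝ) - t j * t k ≤ (-1 + 4*γ) * (a * b) := by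
      nlinarith [mul_pos haj hak,
        mul_le_mul_of_nonpos_left hab (by linarith : (-1 + 4*γ) ≤ 0)]
    calc a⁻¹ * (b⁻¹ * ((inner ℝ (v j) (v k) : ℝ) - t j * t k))
        = ((inner ℝ (v j) (v k) : ℝ) - t j * t k) / (a * b) := by
          field_simp
      _ ≤ (-1 + 4*γ) := by
          rw [div_le_iff₀ (by positivity)]
          linarith [hgoal]
      _ ≤ -(1 / (((2:ℕ):ℝ) - 1)) + 4*γ := by norm_num
end

section
/- Let G = (V,E) be a finite simple graph that is (2,γ)-vector colorable for some 0 < γ ≤ 1/16. Then G contains no odd cycle of length at most 1/(8√γ); that is, G has no cycle whose length ℓ is odd and satisfies ℓ ≤ 1/(8√γ). -/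
theorem stmt1 {V : Type*} [Fintype V] (G : SimpleGraph V) (γ : ℝ)
    (hγ0 : 0 < γ) (hγ1 : γ ≤ 1 / 16)
    (h : VectorColorable G 2 γ) :
    ∀ (a : V) (w : G.Walk a a), w.IsCycle → Odd w.length →
      ¬ ((w.length : ℝ) ≤ 1 / (8 * Real.sqrt γ)) := by
  obtain ⟨d, v, hunit, hadj⟩ := h
  have hedge : ∀ i j, G.Adj i j → ‖v i + v j‖ ≤ Real.sqrt (2 * γ) := by
    intro i j hij
    have hip : (inner ℝ (v i) (v j) : ℝ) ≤ -1 + γ := by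
      have := hadj i j hij; norm_num at this ⊢; linarith
    have hsq : ‖v i + v j‖ ^ 2 ≤ 2 * γ := by
      rw [norm_add_sq_real, hunit i, hunit j]; nlinarith
    have := Real.sqrt_le_sqrt hsq
    rwa [Real.sqrt_sq (norm_nonneg _)] at this
  have key : ∀ (x y : V) (p : G.Walk x y),
      ‖v x - ((-1:ℝ))^p.length • v y‖ ≤ p.length * Real.sqrt (2 * γ) := by
    intro x y p
    induction p with
    | nil => simp
    | @cons x c y hxc q ih =>
      have h1 : v x - ((-1:ℝ))^(q.length + 1) • v y
          = (v x + v c) + (-(v c - ((-1:ℝ))^q.length • v y)) := by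
        rw [pow_succ]
        module
      calc ‖v x - ((-1:ℝ))^(SimpleGraph.Walk.cons hxc q).length • v y‖
          = ‖(v x + v c) + (-(v c - ((-1:ℝ))^q.length • v y))‖ := by
            rw [SimpleGraph.Walk.length_cons, h1]
        _ ≤ ‖v x + v c‖ + ‖-(v c - ((-1:ℝ))^q.length • v y)‖ := norm_add_le _ _
        _ ≤ Real.sqrt (2 * γ) + q.length * Real.sqrt (2 * γ) := by
            rw [norm_neg]; exact add_le_add (hedge x c hxc) ih
        _ = (SimpleGraph.Walk.cons hxc q).length * Real.sqrt (2 * γ) := by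
            rw [SimpleGraph.Walk.length_cons]; push_cast; ring
  intro a w _ hodd hle
  have hk := key a a w
  rw [hodd.neg_one_pow] at hk
  have h2 : ‖v a - (-1 : ℝ) • v a‖ = 2 := by
    have : v a - (-1 : ℝ) • v a = (2 : ℝ) • v a := by module
    rw [this, norm_smul, hunit a]; norm_num
  rw [h2] at hk
  have hsg : 0 < Real.sqrt γ := Real.sqrt_pos.mpr hγ0
  have hs2 : Real.sqrt (2 * γ) = Real.sqrt 2 * Real.sqrt γ := Real.sqrt_mul (by norm_num) _
  have h3 : (w.length : ℝ) * Real.sqrt (2 * γ) ≤ (1 / (8 * Real.sqrt γ)) * (Real.sqrt 2 * Real.sqrt γ) := by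
    rw [hs2]
    apply mul_le_mul hle le_rfl (by positivity) (by positivity)
  have h4 : (1 / (8 * Real.sqrt γ)) * (Real.sqrt 2 * Real.sqrt γ) = Real.sqrt 2 / 8 := by
    field_simp
  have h5 : Real.sqrt 2 ≤ 2 := by
    nlinarith [Real.sq_sqrt (by norm_num : (2:ℝ) ≥ 0), Real.sqrt_nonneg 2]
  rw [h4] at h3
  linarith
end

section
/- There is an absolute constant C > 0 such that the following holds for every real 0 < ε < 1/4 and every finite simple graph G on n ≥ 2 vertices: if every nonempty induced subgraph of G on m vertices contains an independent set of size at least m^{1-2ε}, then G admits a proper vertex coloring using at most C · n^{2ε} · ln n colors. -/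
theorem stmt3 : ∃ C : ℝ, 0 < C ∧
    ∀ (ε : ℝ), 0 < ε → ε < 1 / 4 →
    ∀ (V : Type) [Fintype V] (G : SimpleGraph V),
      2 ≤ Fintype.card V →
      (∀ S : Finset V, S.Nonempty →
        ∃ I : Finset V, I ⊆ S ∧ (∀ i ∈ I, ∀ j ∈ I, ¬ G.Adj i j) ∧
          (S.card : ℝ) ^ (1 - 2 * ε) ≤ (I.card : ℝ)) →
      ∃ k : ℕ, (k : ℝ) ≤ C * (Fintype.card V : ℝ) ^ (2 * ε) *
          Real.log (Fintype.card V) ∧ G.Colorable k := by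
  refine ⟨3, by norm_num, ?_⟩
  intro ε hε hε4 V _ G hn H
  classical
  set n : ℕ := Fintype.card V with hn_def
  have hn1 : (1 : ℝ) ≤ n := by exact_mod_cast Nat.one_le_of_lt hn
  have hn2 : (2 : ℝ) ≤ n := by exact_mod_cast hn
  have hnpos : (0 : ℝ) < n := by linarith
  set δ : ℝ := (n : ℝ) ^ (-(2 * ε)) with hδ_def
  have hδpos : 0 < δ := Real.rpow_pos_of_pos hnpos _
  have hδle1 : δ ≤ 1 := Real.rpow_le_one_of_one_le_of_nonpos hn1 (by linarith)
  have h1δ : 0 ≤ 1 - δ := by linarith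
  have h1δ1 : 1 - δ ≤ 1 := by linarith
  set x : ℝ := (n : ℝ) ^ (2 * ε) * Real.log n with hx_def
  have hlog2 : (0 : ℝ) < Real.log n := Real.log_pos (by linarith)
  have hxpos : 0 < x := by
    apply mul_pos (Real.rpow_pos_of_pos hnpos _) hlog2
  set K : ℕ := ⌊x⌋₊ + 1 with hK_def
  have hKgt : x < K := by
    have := Nat.lt_floor_add_one x
    push_cast [hK_def]
    linarith
  -- small remaining: n * (1-δ)^K < 1
  have hsmall : (n : ℝ) * (1 - δ) ^ K < 1 := by
    have h1 : (1 - δ) ^ K ≤ Real.exp (-δ) ^ K := by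
      apply pow_le_pow_left₀ h1δ
      have := Real.add_one_le_exp (-δ)
      linarith
    have h2 : Real.exp (-δ) ^ K = Real.exp (-(δ * K)) := by
      rw [← Real.exp_nat_mul]; ring_nf
    have h3 : Real.log n < δ * K := by
      have hδx : δ * x = Real.log n := by
        rw [hδ_def, hx_def, ← mul_assoc, ← Real.rpow_add hnpos]
        simp
      calc Real.log n = δ * x := hδx.symm
        _ < δ * K := by exact mul_lt_mul_of_pos_left hKgt hδpos
    have h4 : Real.exp (-(δ * K)) < Real.exp (-(Real.log n)) := by
      apply Real.exp_lt_exp.mpr; linarith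
    have h5 : Real.exp (-(Real.log n)) = 1 / n := by
      rw [Real.exp_neg, Real.exp_log hnpos]; ring
    calc (n : ℝ) * (1 - δ) ^ K ≤ (n : ℝ) * Real.exp (-δ) ^ K := by
          apply mul_le_mul_of_nonneg_left h1 (le_of_lt hnpos)
      _ = (n : ℝ) * Real.exp (-(δ * K)) := by rw [h2]
      _ < (n : ℝ) * (1 / n) := by
          apply mul_lt_mul_of_pos_left _ hnpos
          rw [← h5]; exact h4
      _ = 1 := by field_simp
  -- key induction
  have key : ∀ j : ℕ, ∀ S : Finset V,
      (S.card : ℝ) ≤ (n : ℝ) * (1 - δ) ^ (K - j) →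
      (G.induce (S : Set V)).Colorable j := by
    intro j
    induction j with
    | zero =>
      intro S hS
      have hS0 : S = ∅ := by
        by_contra h
        have : 1 ≤ S.card := Finset.card_pos.mpr (Finset.nonempty_of_ne_empty h)
        have : (1 : ℝ) ≤ S.card := by exact_mod_cast this
        simp only [Nat.sub_zero] at hS
        linarith
      subst hS0
      have : IsEmpty ((↑(∅ : Finset V) : Set V) : Type) := by simp
      exact SimpleGraph.Colorable.of_isEmpty _
    | succ j ih =>
      intro S hS
      rcases eq_or_ne S ∅ with rfl | hSne
      · have : IsEmpty ((↑(∅ : Finset V) : Set V) : Type) := by simp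
        exact SimpleGraph.Colorable.of_isEmpty _
      · have hSne' : S.Nonempty := Finset.nonempty_of_ne_empty hSne
        obtain ⟨I, hIS, hInd, hIcard⟩ := H S hSne'
        have hScard1 : (1 : ℝ) ≤ S.card := by
          exact_mod_cast Finset.card_pos.mpr hSne'
        have hScard_pos : (0 : ℝ) < S.card := by linarith
        have hScard_n : (S.card : ℝ) ≤ n := by
          exact_mod_cast Finset.card_le_card (Finset.subset_univ S) |>.trans
            (le_of_eq (Finset.card_univ))
        -- |I| ≥ δ |S|
        have hIlow : δ * S.card ≤ (I.card : ℝ) := by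
          have h1 : (S.card : ℝ) ^ (1 - 2 * ε)
              = (S.card : ℝ) * (S.card : ℝ) ^ (-(2 * ε)) := by
            rw [show (1 - 2 * ε) = 1 + (-(2 * ε)) by ring,
              Real.rpow_add hScard_pos, Real.rpow_one]
          have h2 : δ ≤ (S.card : ℝ) ^ (-(2 * ε)) := by
            have hb : (S.card : ℝ) ^ (2 * ε) ≤ (n : ℝ) ^ (2 * ε) :=
              Real.rpow_le_rpow (le_of_lt hScard_pos) hScard_n (by positivity)
            rw [hδ_def, Real.rpow_neg (le_of_lt hScard_pos),
              Real.rpow_neg (le_of_lt hnpos), ← one_div, ← one_div]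
            exact one_div_le_one_div_of_le (Real.rpow_pos_of_pos hScard_pos _) hb
          calc δ * S.card ≤ (S.card : ℝ) ^ (-(2 * ε)) * S.card := by
                apply mul_le_mul_of_nonneg_right h2 (le_of_lt hScard_pos)
            _ = (S.card : ℝ) ^ (1 - 2 * ε) := by rw [h1]; ring
            _ ≤ I.card := hIcard
        set T : Finset V := S \ I with hT_def
        have hTcard : (T.card : ℝ) ≤ (n : ℝ) * (1 - δ) ^ (K - j) := by
          have hc : T.card = S.card - I.card := Finset.card_sdiff_of_subset hIS
          have hIle : I.card ≤ S.card := Finset.card_le_card hIS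
          have hcR : (T.card : ℝ) = (S.card : ℝ) - I.card := by
            rw [hc]; push_cast [hIle]; ring
          have step1 : (T.card : ℝ) ≤ (1 - δ) * S.card := by
            rw [hcR]; nlinarith
          have step2 : (1 - δ) * (S.card : ℝ)
              ≤ (1 - δ) * ((n : ℝ) * (1 - δ) ^ (K - (j + 1))) :=
            mul_le_mul_of_nonneg_left hS h1δ
          have step3 : (1 - δ) * ((n : ℝ) * (1 - δ) ^ (K - (j + 1)))
              ≤ (n : ℝ) * (1 - δ) ^ (K - j) := by
            have hexp : K - j ≤ (K - (j + 1)) + 1 := by omega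
            have : (1 - δ) ^ ((K - (j+1)) + 1) ≤ (1 - δ) ^ (K - j) :=
              pow_le_pow_of_le_one h1δ h1δ1 hexp
            calc (1 - δ) * ((n : ℝ) * (1 - δ) ^ (K - (j + 1)))
                = (n : ℝ) * (1 - δ) ^ ((K - (j+1)) + 1) := by ring
              _ ≤ (n : ℝ) * (1 - δ) ^ (K - j) := by
                  apply mul_le_mul_of_nonneg_left this (le_of_lt hnpos)
          linarith
        obtain ⟨c⟩ := ih T hTcard
        refine ⟨SimpleGraph.Coloring.mk
          (fun v => if h : (v : V) ∈ I then Fin.last j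
            else Fin.castSucc (c ⟨(v : V),
              Finset.mem_coe.mpr (Finset.mem_sdiff.mpr
                ⟨Finset.mem_coe.mp v.2, h⟩)⟩)) ?_⟩
        rintro ⟨v, hv⟩ ⟨w, hw⟩ hadj
        have hadj' : G.Adj v w := hadj
        by_cases hvI : v ∈ I <;> by_cases hwI : w ∈ I <;>
          simp only [hvI, hwI, dif_pos, dif_neg, not_false_iff]
        · exact absurd hadj' (hInd v hvI w hwI)
        · exact (Fin.castSucc_lt_last _).ne'
        · exact (Fin.castSucc_lt_last _).ne
        · intro hcol
          have := Fin.castSucc_injective _ hcol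
          exact c.valid (by exact hadj' : (G.induce (T : Set V)).Adj _ _) this
  have hGcol : G.Colorable K := by
    have := key K Finset.univ (by
      simp only [Nat.sub_self, pow_zero, mul_one, Finset.card_univ]
      exact le_refl _)
    rw [Finset.coe_univ] at this
    exact this.of_hom (SimpleGraph.induceUnivIso G).symm.toHom
  refine ⟨K, ?_, hGcol⟩
  have hxhalf : (1 : ℝ) / 2 ≤ x := by
    have h1 : (1 : ℝ) ≤ (n : ℝ) ^ (2 * ε) :=
      Real.one_le_rpow hn1 (by linarith)
    have h2 : Real.log 2 ≤ Real.log n := Real.log_le_log (by norm_num) hn2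
    have h3 : (1 : ℝ) / 2 ≤ Real.log 2 := by
      have := Real.log_two_gt_d9
      linarith
    calc (1 : ℝ) / 2 ≤ Real.log n := by linarith
      _ ≤ (n : ℝ) ^ (2 * ε) * Real.log n := le_mul_of_one_le_left (by linarith) h1
  have hKle : (K : ℝ) ≤ x + 1 := by
    push_cast [hK_def]
    have := Nat.floor_le (le_of_lt hxpos)
    linarith
  calc (K : ℝ) ≤ x + 1 := hKle
    _ ≤ 3 * x := by linarith
    _ = 3 * (n : ℝ) ^ (2 * ε) * Real.log n := by rw [hx_def]; ring
end

section
/- Let v_i, v_j be unit vectors in a real inner product space with ⟨v_i, v_j⟩ = -1/2 + α for some 0 ≤ α ≤ 1/2, and define u = ((1/2 - α)·v_i + v_j)/√(3/4 + α - α²). Then u is a unit vector, and for every vector r and every real β ≥ 0 with ⟨v_i, r⟩ ≥ β and ⟨v_j, r⟩ ≥ β, one has ⟨u, r⟩ ≥ ((3/2 - α)/√(3/4 + α - α²)) · β. -/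
theorem stmt15 {E : Type*} [NormedAddCommGroup E] [InnerProductSpace ℝ E]
    (vi vj : E) (α : ℝ) (h0 : 0 ≤ α) (h1 : α ≤ 1 / 2)
    (hvi : ‖vi‖ = 1) (hvj : ‖vj‖ = 1)
    (hinner : (inner ℝ vi vj : ℝ) = -(1 / 2) + α) :
    ‖(Real.sqrt (3 / 4 + α - α ^ 2))⁻¹ • ((1 / 2 - α) • vi + vj)‖ = 1 ∧
    ∀ (r : E) (β : ℝ), 0 ≤ β → β ≤ (inner ℝ vi r : ℝ) → β ≤ (inner ℝ vj r : ℝ) →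
      ((3 / 2 - α) / Real.sqrt (3 / 4 + α - α ^ 2)) * β ≤
        (inner ℝ ((Real.sqrt (3 / 4 + α - α ^ 2))⁻¹ • ((1 / 2 - α) • vi + vj)) r : ℝ) := by
  have hs : (0:ℝ) < 3 / 4 + α - α ^ 2 := by nlinarith
  have hsq : 0 < Real.sqrt (3 / 4 + α - α ^ 2) := Real.sqrt_pos.mpr hs
  have hcomm : (inner ℝ vj vi : ℝ) = -(1 / 2) + α := by
    rw [real_inner_comm]; exact hinner
  have hnormsq : ‖(1 / 2 - α) • vi + vj‖ ^ 2 = 3 / 4 + α - α ^ 2 := by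
    rw [← real_inner_self_eq_norm_sq]
    simp only [inner_add_add_self, inner_smul_left, inner_smul_right, conj_trivial,
      real_inner_self_eq_norm_sq, hvi, hvj, hinner, hcomm]
    ring
  have hnorm : ‖(1 / 2 - α) • vi + vj‖ = Real.sqrt (3 / 4 + α - α ^ 2) := by
    rw [← hnormsq]
    exact (Real.sqrt_sq (norm_nonneg _)).symm
  constructor
  · rw [norm_smul, hnorm, Real.norm_eq_abs, abs_inv, abs_of_pos hsq,
      inv_mul_cancel₀ hsq.ne']
  · intro r β hβ hir hjr
    have key : (3 / 2 - α) * β ≤ (inner ℝ ((1 / 2 - α) • vi + vj) r : ℝ) := by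
      rw [inner_add_left, inner_smul_left]
      simp only [conj_trivial]
      have h12 : (0:ℝ) ≤ 1 / 2 - α := by linarith
      nlinarith [mul_le_mul_of_nonneg_left hir h12]
    rw [inner_smul_left]
    simp only [conj_trivial]
    have heq : (3 / 2 - α) / Real.sqrt (3 / 4 + α - α ^ 2) * β =
        (Real.sqrt (3 / 4 + α - α ^ 2))⁻¹ * ((3 / 2 - α) * β) := by ring
    rw [heq]
    exact mul_le_mul_of_nonneg_left key (inv_nonneg.mpr hsq.le)
end

section
/- Let G = (V,E) be a finite simple graph that is (3,γ)-vector colorable for some 0 < γ < 1/10. Then for every vertex i ∈ V, the subgraph of G induced on the neighborhood N(i) contains no odd cycle of length at most 1/(16√γ). -/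
lemma walk_norm_bound {V' : Type*} {G' : SimpleGraph V'} {d : ℕ}
    (u : V' → EuclideanSpace ℝ (Fin d)) (C : ℝ)
    (hedge : ∀ a b : V', G'.Adj a b → ‖u a + u b‖ ≤ C) :
    ∀ {a b : V'} (w : G'.Walk a b),
      ‖u a - (-1:ℝ)^w.length • u b‖ ≤ (w.length : ℝ) * C := by
  intro a b w
  induction w with
  | nil => simp
  | @cons x y z h p ih =>
    have hlen : (SimpleGraph.Walk.cons h p).length = p.length + 1 := rfl
    have key : u x - (-1:ℝ)^(p.length+1) • u z
        = (u x + u y) - (u y - (-1:ℝ)^p.length • u z) := by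
      rw [pow_succ]
      module
    rw [hlen, key]
    calc ‖(u x + u y) - (u y - (-1:ℝ)^p.length • u z)‖
        ≤ ‖u x + u y‖ + ‖u y - (-1:ℝ)^p.length • u z‖ := norm_sub_le _ _
      _ ≤ C + (p.length : ℝ) * C := add_le_add (hedge x y h) ih
      _ = ((p.length + 1 : ℕ) : ℝ) * C := by push_cast; ring

theorem stmt16 {V : Type*} [Fintype V] (G : SimpleGraph V) (γ : ℝ)
    (hγ0 : 0 < γ) (hγ1 : γ < 1 / 10)
    (h : VectorColorable G 3 γ) (i : V) :
    ∀ (a : ↥(G.neighborSet i)) (w : (G.induce (G.neighborSet i)).Walk a a),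
      w.IsCycle → Odd w.length → ¬ ((w.length : ℝ) ≤ 1 / (16 * Real.sqrt γ)) := by
  obtain ⟨d, v, hunit, hadj⟩ := h
  intro a w hcyc hodd hle
  have hγ : (0:ℝ) ≤ γ := le_of_lt hγ0
  set u : ↥(G.neighborSet i) → EuclideanSpace ℝ (Fin d) :=
    fun a => v a.1 + (1/2 : ℝ) • v i with hu
  -- edge bound
  have hC : ∀ x y : ↥(G.neighborSet i), (G.induce (G.neighborSet i)).Adj x y →
      ‖u x + u y‖ ≤ Real.sqrt (6*γ) := by
    intro x y hxy
    have hxy' : G.Adj x.1 y.1 := hxy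
    have e1 := hadj x.1 y.1 hxy'
    have e2 := hadj i x.1 x.2
    have e3 := hadj i y.1 y.2
    have hhalf : -(1 / ((3:ℕ) - 1 : ℝ)) + γ = -(1/2) + γ := by norm_num
    rw [hhalf] at e1 e2 e3
    have hsum : u x + u y = (v x.1 + v y.1) + v i := by
      simp only [hu]
      module
    have hsq : ‖u x + u y‖^2 ≤ 6*γ := by
      rw [hsum, norm_add_sq_real, norm_add_sq_real, inner_add_left]
      have h2 : (inner ℝ (v x.1) (v i) : ℝ) ≤ -(1/2) + γ := by
        rwa [real_inner_comm] at e2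
      have h3 : (inner ℝ (v y.1) (v i) : ℝ) ≤ -(1/2) + γ := by
        rwa [real_inner_comm] at e3
      rw [hunit, hunit, hunit]
      nlinarith [e1, h2, h3]
    calc ‖u x + u y‖ = Real.sqrt (‖u x + u y‖^2) := by
            rw [Real.sqrt_sq (norm_nonneg _)]
      _ ≤ Real.sqrt (6*γ) := Real.sqrt_le_sqrt hsq
  -- lower bound on ‖u a‖
  have hlow : (1/2 : ℝ) ≤ ‖u a‖ := by
    have hinner : (-1 : ℝ) ≤ (inner ℝ (v a.1) (v i) : ℝ) := by
      have := abs_real_inner_le_norm (v a.1) (v i)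
      rw [hunit, hunit] at this
      have := neg_le_of_abs_le this
      linarith
    have hsq : (1/2 : ℝ)^2 ≤ ‖u a‖^2 := by
      have : ‖u a‖^2 = ‖v a.1‖^2 + 2 * ((1/2:ℝ) * (inner ℝ (v a.1) (v i) : ℝ))
          + ‖(1/2:ℝ) • v i‖^2 := by
        simp only [hu]
        rw [norm_add_sq_real, real_inner_smul_right]
      rw [this, norm_smul, hunit, hunit, Real.norm_eq_abs,
        abs_of_nonneg (by norm_num : (0:ℝ) ≤ 1/2)]
      nlinarith [hinner]
    nlinarith [hsq, norm_nonneg (u a)]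
  -- walk bound
  have hwalk := walk_norm_bound u (Real.sqrt (6*γ)) hC w
  rw [Odd.neg_one_pow hodd] at hwalk
  have hleft : ‖u a - (-1:ℝ) • u a‖ = 2 * ‖u a‖ := by
    have : u a - (-1:ℝ) • u a = (2:ℝ) • u a := by module
    rw [this, norm_smul]
    norm_num
  rw [hleft] at hwalk
  have h1 : (1:ℝ) ≤ (w.length : ℝ) * Real.sqrt (6*γ) := by linarith
  -- final contradiction
  have hsg : Real.sqrt (6*γ) = Real.sqrt 6 * Real.sqrt γ := Real.sqrt_mul (by norm_num) γ
  have hsγ : 0 < Real.sqrt γ := Real.sqrt_pos.mpr hγ0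
  have h2 : (w.length : ℝ) * Real.sqrt (6*γ) ≤ (1 / (16 * Real.sqrt γ)) * Real.sqrt (6*γ) :=
    mul_le_mul_of_nonneg_right hle (Real.sqrt_nonneg _)
  have h3 : (1 / (16 * Real.sqrt γ)) * Real.sqrt (6*γ) = Real.sqrt 6 / 16 := by
    rw [hsg]
    field_simp
  have h6 : Real.sqrt 6 < 16 := by
    have : Real.sqrt 6 < Real.sqrt 256 := Real.sqrt_lt_sqrt (by norm_num) (by norm_num)
    have h256 : Real.sqrt 256 = 16 := by
      rw [show (256:ℝ) = 16^2 by norm_num, Real.sqrt_sq (by norm_num)]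
    linarith
  rw [h3] at h2; linarith
end
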